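/- Let d ≥ 3 and 1 ≤ k ≤ d−2 be integers, let p be an IDF prime for (d,k), and let r be the unique integer with 0 ≤ r ≤ k and p ∣ d−r. Let α, β, x be rational numbers with α ≠ 0, β ≠ 0, x ≠ 0 and v_p(x) < 0. Then: (a) if f_{α,β}(x) ≠ 0, then v_p(f_{α,β}(x)) ≥ min{v_p(α) + v_p(d−r) + d·v_p(x), v_p(α) + (d−r)·v_p(x), v_p(β)}; (b) the two quantities v_p(α) + v_p(d−r) + d·v_p(x) and v_p(α) + (d−r)·v_p(x) are never equal; (c) if the minimum in (a) is attained by exactly one of the three quantities, then f_{α,β}(x) ≠ 0 and v_p(f_{α,β}(x)) equals that minimum. -/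

import Mathlib

open Finset Function

/-- The coefficient `b_i` of `z^(d-i)` in the normalized dynamical Belyi polynomial
`B_{d,k}`. -/
def belyiCoeff (d k i : ℕ) : ℚ :=
  ((-1 : ℚ) ^ (k - i) / ((k - i).factorial * i.factorial)) *
    ∏ j ∈ (Finset.range (k + 1)).erase i, ((d : ℚ) - (j : ℚ))

/-- The normalized dynamical Belyi polynomial `B_{d,k}` as a function on `ℚ`. -/
def belyi (d k : ℕ) (z : ℚ) : ℚ :=
  ∑ i ∈ Finset.range (k + 1), belyiCoeff d k i * z ^ (d - i)

/-- The map `f_{a,c}(z) = a · B_{d,k}(z) + c`. -/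
def belyiMap (d k : ℕ) (a c z : ℚ) : ℚ := a * belyi d k z + c

/-- `p` is an index divisor free (IDF) prime for the pair `(d,k)`:
`p` is a prime with `p > k`, `p ∣ d - r` for some `r ≤ k`, and `r ∤ v_p(d-r)`. -/
def IsIDFPrime (d k p : ℕ) : Prop :=
  p.Prime ∧ k < p ∧ ∃ r ≤ k, p ∣ (d - r) ∧ ¬ (r ∣ padicValNat p (d - r))

/-- A rational number is `p`-integral if it is zero or has nonnegative `p`-adic valuation. -/
def PIntegral (p : ℕ) (x : ℚ) : Prop := x = 0 ∨ 0 ≤ padicValRat p x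

section Aux
variable {p : ℕ} [hp : Fact p.Prime] {ι : Type*}

lemma aux_sum_gt {c : ℤ} (T : Finset ι) (f : ι → ℚ)
    (h : ∀ i ∈ T, c < padicValRat p (f i)) :
    (∑ i ∈ T, f i) = 0 ∨ c < padicValRat p (∑ i ∈ T, f i) := by
  induction T using Finset.cons_induction with
  | empty => left; simp
  | cons a T ha ih =>
    rw [Finset.sum_cons]
    by_cases h0 : ∑ i ∈ T, f i = 0
    · rw [h0, add_zero]; right; exact h a (Finset.mem_cons_self a T)
    · rcases ih (fun i hi => h i (Finset.mem_cons_of_mem hi)) with h1 | h1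
      · exact absurd h1 h0
      · by_cases hs : f a + ∑ i ∈ T, f i = 0
        · left; exact hs
        · right
          exact lt_of_lt_of_le (lt_min (h a (Finset.mem_cons_self a T)) h1)
            (padicValRat.min_le_padicValRat_add hs)

lemma aux_sum_eq [DecidableEq ι] (S : Finset ι) (f : ι → ℚ) (i₀ : ι) (hi₀ : i₀ ∈ S)
    (h0 : f i₀ ≠ 0)
    (h : ∀ i ∈ S, i ≠ i₀ → padicValRat p (f i₀) < padicValRat p (f i)) :
    (∑ i ∈ S, f i) ≠ 0 ∧ padicValRat p (∑ i ∈ S, f i) = padicValRat p (f i₀) := by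
  rw [← Finset.add_sum_erase S f hi₀]
  by_cases hrest : ∑ i ∈ S.erase i₀, f i = 0
  · rw [hrest, add_zero]; exact ⟨h0, rfl⟩
  · have h1 : padicValRat p (f i₀) < padicValRat p (∑ i ∈ S.erase i₀, f i) := by
      rcases aux_sum_gt (S.erase i₀) f
        (fun i hi => h i (Finset.mem_of_mem_erase hi) (Finset.ne_of_mem_erase hi)) with h1 | h1
      · exact absurd h1 hrest
      · exact h1
    have hne : f i₀ + ∑ i ∈ S.erase i₀, f i ≠ 0 := by
      intro hEq
      have h2 : ∑ i ∈ S.erase i₀, f i = -f i₀ := by linarith [hEq]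
      rw [h2, padicValRat.neg] at h1
      exact lt_irrefl _ h1
    exact ⟨hne, padicValRat.add_eq_of_lt hne h0 hrest h1⟩

lemma aux_prod (S : Finset ι) (f : ι → ℚ) (h : ∀ i ∈ S, f i ≠ 0) :
    padicValRat p (∏ i ∈ S, f i) = ∑ i ∈ S, padicValRat p (f i) := by
  induction S using Finset.cons_induction with
  | empty => simp
  | cons a T ha ih =>
    rw [Finset.prod_cons, Finset.sum_cons,
      padicValRat.mul (h a (Finset.mem_cons_self a T))
        (Finset.prod_ne_zero_iff.2 fun i hi => h i (Finset.mem_cons_of_mem hi)),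
      ih (fun i hi => h i (Finset.mem_cons_of_mem hi))]

end Aux

section Coeff
variable {d k p r : ℕ} [hp : Fact p.Prime]

lemma factor_val (hkp : k < p) (hdk : k + 2 ≤ d) (hr : r ≤ k) (hpr : p ∣ (d - r))
    {j : ℕ} (hj : j ≤ k) :
    ((d : ℚ) - (j : ℚ)) ≠ 0 ∧
      padicValRat p ((d : ℚ) - (j : ℚ)) =
        (if j = r then (padicValNat p (d - r) : ℤ) else 0) := by
  have hjd : j ≤ d := by omega
  have hcast : ((d : ℚ) - (j : ℚ)) = ((d - j : ℕ) : ℚ) := by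
    push_cast [Nat.cast_sub hjd]; ring
  have hdj : d - j ≠ 0 := by omega
  refine ⟨by rw [hcast]; exact_mod_cast hdj, ?_⟩
  rw [hcast, padicValRat.of_nat]
  by_cases hjr : j = r
  · subst hjr; simp
  · rw [if_neg hjr]
    have hnd : ¬ p ∣ (d - j) := by
      intro hdvd
      have h1 : (p : ℤ) ∣ ((d : ℤ) - j) := by
        rwa [← Nat.cast_sub hjd, Int.natCast_dvd_natCast]
      have h2 : (p : ℤ) ∣ ((d : ℤ) - r) := by
        rw [← Nat.cast_sub (by omega : r ≤ d), Int.natCast_dvd_natCast]; exact hpr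
      have h3 : (p : ℤ) ∣ ((r : ℤ) - j) := by
        have := dvd_sub h1 h2
        have heq : (d : ℤ) - j - ((d : ℤ) - r) = (r : ℤ) - j := by ring
        rwa [heq] at this
      have h4 : p ∣ ((r : ℤ) - j).natAbs := Int.natCast_dvd_natCast.mp
        (by rwa [Int.dvd_natAbs])
      have h5 : ((r : ℤ) - j).natAbs ≤ k := by omega
      have h6 : ((r : ℤ) - j).natAbs ≠ 0 := by omega
      have := Nat.le_of_dvd (by omega) h4
      omega
    simp [padicValNat.eq_zero_of_not_dvd hnd]

lemma belyiCoeff_val (hkp : k < p) (hdk : k + 2 ≤ d) (hr : r ≤ k) (hpr : p ∣ (d - r))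
    {i : ℕ} (hi : i ≤ k) :
    belyiCoeff d k i ≠ 0 ∧
      padicValRat p (belyiCoeff d k i) =
        (if i = r then 0 else (padicValNat p (d - r) : ℤ)) := by
  have hfac : ∀ j ∈ (Finset.range (k + 1)).erase i, ((d : ℚ) - (j : ℚ)) ≠ 0 := by
    intro j hj
    exact (factor_val hkp hdk hr hpr (by
      have := Finset.mem_range.mp (Finset.mem_of_mem_erase hj); omega)).1
  have hprod : (∏ j ∈ (Finset.range (k + 1)).erase i, ((d : ℚ) - (j : ℚ))) ≠ 0 :=
    Finset.prod_ne_zero_iff.2 hfac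
  have hsign : ((-1 : ℚ) ^ (k - i) / ((k - i).factorial * i.factorial)) ≠ 0 := by
    apply div_ne_zero
    · exact pow_ne_zero _ (by norm_num)
    · positivity
  have hcne : belyiCoeff d k i ≠ 0 := mul_ne_zero hsign hprod
  refine ⟨hcne, ?_⟩
  have hvsign : padicValRat p ((-1 : ℚ) ^ (k - i) / ((k - i).factorial * i.factorial)) = 0 := by
    rw [padicValRat.div (pow_ne_zero _ (by norm_num)) (by positivity)]
    have h1 : padicValRat p ((-1 : ℚ) ^ (k - i)) = 0 := by
      rw [padicValRat.pow (-1 : ℚ)]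
      have : padicValRat p (-1 : ℚ) = 0 := by
        rw [show (-1 : ℚ) = -(1 : ℚ) by norm_num, padicValRat.neg]; simp
      rw [this, mul_zero]
    have h2 : padicValRat p (((k - i).factorial * i.factorial : ℚ)) = 0 := by
      have hc : (((k - i).factorial * i.factorial : ℕ) : ℚ)
          = ((k - i).factorial : ℚ) * (i.factorial : ℚ) := by push_cast; ring
      rw [← hc, padicValRat.of_nat]
      have : ¬ p ∣ ((k - i).factorial * i.factorial) := by
        intro hdvd
        rcases (Nat.Prime.dvd_mul hp.out).mp hdvd with h | h
        · exact absurd ((Nat.Prime.dvd_factorial hp.out).mp h) (by omega)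
        · exact absurd ((Nat.Prime.dvd_factorial hp.out).mp h) (by omega)
      simp [padicValNat.eq_zero_of_not_dvd this]
    rw [h1, h2, sub_zero]
  rw [belyiCoeff, padicValRat.mul hsign hprod, hvsign, zero_add,
    aux_prod _ _ hfac]
  have hcongr : ∑ j ∈ (Finset.range (k + 1)).erase i, padicValRat p ((d : ℚ) - (j : ℚ))
      = ∑ j ∈ (Finset.range (k + 1)).erase i,
          (if j = r then (padicValNat p (d - r) : ℤ) else 0) := by
    apply Finset.sum_congr rfl
    intro j hj
    exact (factor_val hkp hdk hr hpr (by
      have := Finset.mem_range.mp (Finset.mem_of_mem_erase hj); omega)).2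
  rw [hcongr, Finset.sum_ite_eq' _ r (fun _ => (padicValNat p (d - r) : ℤ))]
  by_cases hir : i = r
  · subst hir
    rw [if_pos rfl, if_neg (by simp)]
  · rw [if_neg hir, if_pos]
    exact Finset.mem_erase.mpr ⟨Ne.symm hir, Finset.mem_range.mpr (by omega)⟩
end Coeff

section Main
variable {d k p r : ℕ} [hp : Fact p.Prime]

lemma term_val (hkp : k < p) (hdk : k + 2 ≤ d) (hr : r ≤ k) (hpr : p ∣ (d - r))
    {i : ℕ} (hi : i ≤ k) {x : ℚ} (hx : x ≠ 0) :
    belyiCoeff d k i * x ^ (d - i) ≠ 0 ∧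
      padicValRat p (belyiCoeff d k i * x ^ (d - i)) =
        (if i = r then 0 else (padicValNat p (d - r) : ℤ)) +
          ((d : ℤ) - (i : ℤ)) * padicValRat p x := by
  obtain ⟨hc0, hcv⟩ := belyiCoeff_val hkp hdk hr hpr hi
  have hxp : x ^ (d - i) ≠ 0 := pow_ne_zero _ hx
  refine ⟨mul_ne_zero hc0 hxp, ?_⟩
  rw [padicValRat.mul hc0 hxp, hcv, padicValRat.pow x]
  have : ((d - i : ℕ) : ℤ) = (d : ℤ) - (i : ℤ) := by omega
  rw [this]

lemma belyi_val (hkp : k < p) (hdk : k + 2 ≤ d) (hr : r ≤ k) (hpr : p ∣ (d - r))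
    (hidf : ¬ (r ∣ padicValNat p (d - r))) {x : ℚ} (hx : x ≠ 0)
    (hvx : padicValRat p x < 0) :
    belyi d k x ≠ 0 ∧
      padicValRat p (belyi d k x) =
        min ((padicValNat p (d - r) : ℤ) + (d : ℤ) * padicValRat p x)
          (((d : ℤ) - (r : ℤ)) * padicValRat p x) := by
  have hv1 : 1 ≤ padicValNat p (d - r) := one_le_padicValNat_of_dvd (by omega) hpr
  set m : ℤ := padicValRat p x with hm
  set v : ℕ := padicValNat p (d - r) with hv
  have hm1 : m ≤ -1 := by omega
  have hvr : (v : ℤ) + (r : ℤ) * m ≠ 0 := by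
    intro h
    have hdvd : (r : ℤ) ∣ (v : ℤ) := ⟨-m, by linarith⟩
    exact hidf (Int.natCast_dvd_natCast.mp hdvd)
  rcases lt_or_gt_of_ne hvr with hc | hc
  · -- minimum attained at i = 0
    have hr0 : r ≠ 0 := by
      intro h; subst h; simp at hc; omega
    obtain ⟨h0ne, h0v⟩ := term_val (p := p) hkp hdk hr hpr (Nat.zero_le k) hx
    rw [if_neg (Ne.symm hr0), ← hm, ← hv] at h0v
    simp only [Nat.cast_zero, sub_zero] at h0v
    have huniq : ∀ i ∈ Finset.range (k + 1), i ≠ 0 →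
        padicValRat p (belyiCoeff d k 0 * x ^ (d - 0)) <
          padicValRat p (belyiCoeff d k i * x ^ (d - i)) := by
      intro i hi hine
      have hik : i ≤ k := by have := Finset.mem_range.mp hi; omega
      have hi1 : 1 ≤ (i : ℤ) := by
        have : i ≠ 0 := hine; omega
      obtain ⟨_, hiv⟩ := term_val (p := p) hkp hdk hr hpr hik hx
      rw [← hm, ← hv] at hiv
      rw [h0v, hiv]
      by_cases hir : i = r
      · rw [if_pos hir, hir]
        have hexp : ((d : ℤ) - (r : ℤ)) * m = (d : ℤ) * m - (r : ℤ) * m := by ring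
        rw [hexp]; push_cast; linarith
      · rw [if_neg hir]
        have hexp : ((d : ℤ) - (i : ℤ)) * m = (d : ℤ) * m - (i : ℤ) * m := by ring
        rw [hexp]
        nlinarith [mul_pos (lt_of_lt_of_le zero_lt_one hi1) (by linarith : (0 : ℤ) < -m)]
    obtain ⟨hsne, hsv⟩ := aux_sum_eq (Finset.range (k + 1))
      (fun i => belyiCoeff d k i * x ^ (d - i)) 0
      (Finset.mem_range.mpr (by omega)) h0ne huniq
    refine ⟨hsne, ?_⟩
    rw [belyi, hsv, h0v]
    have hexp : ((d : ℤ) - (r : ℤ)) * m = (d : ℤ) * m - (r : ℤ) * m := by ring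
    exact (min_eq_left (by rw [hexp]; linarith)).symm
  · -- minimum attained at i = r
    obtain ⟨hrne, hrv⟩ := term_val (p := p) hkp hdk hr hpr hr hx
    rw [if_pos rfl, zero_add, ← hm] at hrv
    have huniq : ∀ i ∈ Finset.range (k + 1), i ≠ r →
        padicValRat p (belyiCoeff d k r * x ^ (d - r)) <
          padicValRat p (belyiCoeff d k i * x ^ (d - i)) := by
      intro i hi hine
      have hik : i ≤ k := by have := Finset.mem_range.mp hi; omega
      obtain ⟨_, hiv⟩ := term_val (p := p) hkp hdk hr hpr hik hx
      rw [← hm, ← hv] at hiv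
      rw [hrv, hiv, if_neg hine]
      have him : (i : ℤ) * m ≤ 0 :=
        mul_nonpos_of_nonneg_of_nonpos (by positivity) (by omega)
      have hexp1 : ((d : ℤ) - (r : ℤ)) * m = (d : ℤ) * m - (r : ℤ) * m := by ring
      have hexp2 : ((d : ℤ) - (i : ℤ)) * m = (d : ℤ) * m - (i : ℤ) * m := by ring
      rw [hexp1, hexp2]; linarith
    obtain ⟨hsne, hsv⟩ := aux_sum_eq (Finset.range (k + 1))
      (fun i => belyiCoeff d k i * x ^ (d - i)) r
      (Finset.mem_range.mpr (by omega)) hrne huniq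
    refine ⟨hsne, ?_⟩
    rw [belyi, hsv, hrv]
    have hexp : ((d : ℤ) - (r : ℤ)) * m = (d : ℤ) * m - (r : ℤ) * m := by ring
    exact (min_eq_right (by rw [hexp]; linarith)).symm

end Main

lemma add_ne_zero_of_val_ne {p : ℕ} [Fact p.Prime] {q s : ℚ} (hq : q ≠ 0)
    (h : padicValRat p q ≠ padicValRat p s) : q + s ≠ 0 := by
  intro h0
  have hs : s = -q := by linarith
  rw [hs, padicValRat.neg] at h
  exact h rfl


/-- Valuation of the image of a point with negative valuation under
`f_{α,β}`. -/
theorem padicValRat_belyiMap_of_val_neg (d k p r : ℕ) (hd : 3 ≤ d) (hk1 : 1 ≤ k)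
    (hk2 : k ≤ d - 2) (hp : IsIDFPrime d k p) (hr : r ≤ k) (hpr : p ∣ (d - r))
    (hidf : ¬ (r ∣ padicValNat p (d - r)))
    (α β x : ℚ) (hα : α ≠ 0) (hβ : β ≠ 0) (hx : x ≠ 0)
    (hvx : padicValRat p x < 0) :
    (belyiMap d k α β x ≠ 0 →
      min (padicValRat p α + (padicValNat p (d - r) : ℤ) + (d : ℤ) * padicValRat p x)
          (min (padicValRat p α + ((d : ℤ) - (r : ℤ)) * padicValRat p x)
            (padicValRat p β)) ≤ padicValRat p (belyiMap d k α β x)) ∧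
    (padicValRat p α + (padicValNat p (d - r) : ℤ) + (d : ℤ) * padicValRat p x ≠
      padicValRat p α + ((d : ℤ) - (r : ℤ)) * padicValRat p x) ∧
    (∀ A B C : ℤ,
      A = padicValRat p α + (padicValNat p (d - r) : ℤ) + (d : ℤ) * padicValRat p x →
      B = padicValRat p α + ((d : ℤ) - (r : ℤ)) * padicValRat p x →
      C = padicValRat p β →
      ((A < B ∧ A < C) ∨ (B < A ∧ B < C) ∨ (C < A ∧ C < B)) →
      belyiMap d k α β x ≠ 0 ∧
        padicValRat p (belyiMap d k α β x) = min A (min B C)) := by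
  haveI : Fact p.Prime := ⟨hp.1⟩
  have hkp : k < p := hp.2.1
  have hdk : k + 2 ≤ d := by omega
  obtain ⟨hBne, hBval⟩ := belyi_val hkp hdk hr hpr hidf hx hvx
  have hqne : α * belyi d k x ≠ 0 := mul_ne_zero hα hBne
  set MA : ℤ := padicValRat p α with hMA
  set m : ℤ := padicValRat p x with hm
  set v : ℕ := padicValNat p (d - r) with hv
  have hexp : ((d : ℤ) - (r : ℤ)) * m = (d : ℤ) * m - (r : ℤ) * m := by ring
  have hvq : padicValRat p (α * belyi d k x) =
      min (MA + (v : ℤ) + (d : ℤ) * m) (MA + ((d : ℤ) - (r : ℤ)) * m) := by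
    rw [padicValRat.mul hα hBne, hBval]
    rcases le_total ((v : ℤ) + (d : ℤ) * m) (((d : ℤ) - (r : ℤ)) * m) with h | h
    · rw [min_eq_left h, min_eq_left (by linarith)]; ring
    · rw [min_eq_right h, min_eq_right (by linarith)]
  have hmap : belyiMap d k α β x = α * belyi d k x + β := rfl
  refine ⟨?_, ?_, ?_⟩
  · intro hne
    rw [hmap] at hne ⊢
    calc min (MA + (v : ℤ) + (d : ℤ) * m)
          (min (MA + ((d : ℤ) - (r : ℤ)) * m) (padicValRat p β))
        = min (min (MA + (v : ℤ) + (d : ℤ) * m) (MA + ((d : ℤ) - (r : ℤ)) * m))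
            (padicValRat p β) := (min_assoc _ _ _).symm
      _ = min (padicValRat p (α * belyi d k x)) (padicValRat p β) := by rw [hvq]
      _ ≤ padicValRat p (α * belyi d k x + β) := padicValRat.min_le_padicValRat_add hne
  · intro h
    have h' : (v : ℤ) + (r : ℤ) * m = 0 := by rw [hexp] at h; linarith
    have hdvd : (r : ℤ) ∣ (v : ℤ) := ⟨-m, by linarith⟩
    exact hidf (Int.natCast_dvd_natCast.mp hdvd)
  · intro A B C hA hB hC hcase
    have hq' : padicValRat p (α * belyi d k x) = min A B := by
      rw [hA, hB]; exact hvq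
    rcases hcase with ⟨h1, h2⟩ | ⟨h1, h2⟩ | ⟨h1, h2⟩
    · have hqA : padicValRat p (α * belyi d k x) = A := by
        rw [hq', min_eq_left h1.le]
      have hne : α * belyi d k x + β ≠ 0 :=
        add_ne_zero_of_val_ne hqne (by rw [hqA, ← hC]; exact h2.ne)
      rw [hmap]
      refine ⟨hne, ?_⟩
      rw [padicValRat.add_eq_of_lt hne hqne hβ (by rw [hqA, ← hC]; exact h2), hqA,
        min_eq_left (le_min h1.le h2.le)]
    · have hqB : padicValRat p (α * belyi d k x) = B := by
        rw [hq', min_eq_right h1.le]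
      have hne : α * belyi d k x + β ≠ 0 :=
        add_ne_zero_of_val_ne hqne (by rw [hqB, ← hC]; exact h2.ne)
      rw [hmap]
      refine ⟨hne, ?_⟩
      rw [padicValRat.add_eq_of_lt hne hqne hβ (by rw [hqB, ← hC]; exact h2), hqB,
        min_eq_left h2.le, min_eq_right h1.le]
    · have hCq : C < padicValRat p (α * belyi d k x) := by
        rw [hq']; exact lt_min h1 h2
      have hne' : β + α * belyi d k x ≠ 0 :=
        add_ne_zero_of_val_ne hβ (by rw [← hC]; exact (ne_of_lt hCq))
      have hne : α * belyi d k x + β ≠ 0 := by rwa [add_comm] at hne'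
      rw [hmap]
      refine ⟨hne, ?_⟩
      have : padicValRat p (α * belyi d k x + β) = padicValRat p β := by
        rw [add_comm]
        exact padicValRat.add_eq_of_lt hne' hβ hqne (by rw [← hC]; exact hCq)
      rw [this, ← hC, min_eq_right h2.le, min_eq_right h1.le]
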